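/- Let a ∈ ℝᵐ, s > 0, and let u be a map from an open subset of ℝⁿ to ℝᵐ differentiable at a point x with |u(x) − a| > s. Define v = a + s·(u − a)/|u − a| on a neighborhood of x (the radial truncation of u onto the sphere of radius s about a). Then v is differentiable at x and ‖Dv(x)‖ ≤ ‖Du(x)‖, where ‖·‖ denotes the Hilbert–Schmidt (Frobenius) norm; more precisely ‖Dv(x)‖² = s²·‖Dn(x)‖² ≤ |u(x) − a|²·‖Dn(x)‖² ≤ ‖Du(x)‖², with n = (u − a)/|u − a|. -/

import Mathlib

open MeasureTheory Set
open scoped RealInnerProductSpace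

/-- Hilbert–Schmidt (Frobenius) norm of a linear map between Euclidean spaces. -/
noncomputable def hsNorm {n m : ℕ}
    (L : EuclideanSpace ℝ (Fin n) →L[ℝ] EuclideanSpace ℝ (Fin m)) : ℝ :=
  Real.sqrt (∑ i : Fin n, ‖L (EuclideanSpace.single i 1)‖ ^ 2)

/-- The energy functional `J_Ω(v) = ∫_Ω ((1/2)‖Dv‖² + W(v)) dx`. -/
noncomputable def energy {n m : ℕ} (Ω : Set (EuclideanSpace ℝ (Fin n)))
    (W : EuclideanSpace ℝ (Fin m) → ℝ)
    (v : EuclideanSpace ℝ (Fin n) → EuclideanSpace ℝ (Fin m)) : ℝ :=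
  ∫ x in Ω, ((1 / 2 : ℝ) * hsNorm (fderiv ℝ v x) ^ 2 + W (v x))

/-- Hypothesis (H): `a` is a global minimum of `W` with `W a = 0`, and for every
unit vector `w` the function `λ ↦ W (a + λ w)` is strictly increasing on `[0, r₀)`. -/
def HypH {m : ℕ} (W : EuclideanSpace ℝ (Fin m) → ℝ)
    (a : EuclideanSpace ℝ (Fin m)) (r₀ : ℝ) : Prop :=
  W a = 0 ∧ (∀ v, W a ≤ W v) ∧
    ∀ w : EuclideanSpace ℝ (Fin m), ‖w‖ = 1 →
      StrictMonoOn (fun t : ℝ => W (a + t • w)) (Set.Ico (0 : ℝ) r₀)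

/-- A set has Lipschitz boundary: uniform interior cone condition at every
boundary point (the standard equivalent of being locally the hypograph of a
Lipschitz function). -/
def HasLipschitzBoundary {n : ℕ} (s : Set (EuclideanSpace ℝ (Fin n))) : Prop :=
  ∀ x ∈ frontier s, ∃ ν : EuclideanSpace ℝ (Fin n), ∃ ε c : ℝ,
    ‖ν‖ = 1 ∧ 0 < ε ∧ 0 < c ∧
    ∀ y ∈ s ∩ Metric.ball x ε, ∀ t ∈ Set.Ioo (0 : ℝ) ε,
      Metric.ball (y + t • ν) (c * t) ⊆ s

/-- `v` is differentiable almost everywhere on `Ω`. -/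
def DiffAEOn {n m : ℕ} (Ω : Set (EuclideanSpace ℝ (Fin n)))
    (v : EuclideanSpace ℝ (Fin n) → EuclideanSpace ℝ (Fin m)) : Prop :=
  ∀ᵐ x ∂(volume.restrict Ω), DifferentiableAt ℝ v x

/-- The point of `ℝ²` (as Euclidean space) with coordinates `x₁, x₂`. -/
noncomputable def mk2 (x₁ x₂ : ℝ) : EuclideanSpace ℝ (Fin 2) := WithLp.toLp 2 ![x₁, x₂]

lemma hsNorm_sq' {n m : ℕ} (L : EuclideanSpace ℝ (Fin n) →L[ℝ] EuclideanSpace ℝ (Fin m)) :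
    hsNorm L ^ 2 = ∑ i : Fin n, ‖L (EuclideanSpace.single i 1)‖ ^ 2 :=
  Real.sq_sqrt (Finset.sum_nonneg fun _ _ => sq_nonneg _)

theorem radial_truncation_gradient_bound
    {n m : ℕ} (a : EuclideanSpace ℝ (Fin m)) (s : ℝ) (hs : 0 < s)
    (u : EuclideanSpace ℝ (Fin n) → EuclideanSpace ℝ (Fin m))
    (x : EuclideanSpace ℝ (Fin n))
    (hu : DifferentiableAt ℝ u x)
    (hgt : s < ‖u x - a‖)
    (nvec : EuclideanSpace ℝ (Fin n) → EuclideanSpace ℝ (Fin m))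
    (hnvec : nvec = fun y => ‖u y - a‖⁻¹ • (u y - a))
    (v : EuclideanSpace ℝ (Fin n) → EuclideanSpace ℝ (Fin m))
    (hv : v = fun y => a + s • nvec y) :
    DifferentiableAt ℝ v x ∧
    hsNorm (fderiv ℝ v x) ≤ hsNorm (fderiv ℝ u x) ∧
    hsNorm (fderiv ℝ v x) ^ 2 = s ^ 2 * hsNorm (fderiv ℝ nvec x) ^ 2 ∧
    s ^ 2 * hsNorm (fderiv ℝ nvec x) ^ 2 ≤
      ‖u x - a‖ ^ 2 * hsNorm (fderiv ℝ nvec x) ^ 2 ∧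
    ‖u x - a‖ ^ 2 * hsNorm (fderiv ℝ nvec x) ^ 2 ≤ hsNorm (fderiv ℝ u x) ^ 2 := by
  have h0 : u x - a ≠ 0 := by
    intro h; rw [h, norm_zero] at hgt; linarith
  have hρne : ‖u x - a‖ ≠ 0 := norm_ne_zero_iff.mpr h0
  have hsub : DifferentiableAt ℝ (fun y => u y - a) x := hu.sub_const a
  have hρ : DifferentiableAt ℝ (fun y => ‖u y - a‖) x := hsub.norm ℝ h0
  have hn : DifferentiableAt ℝ nvec x := by
    rw [hnvec]; exact (hρ.inv hρne).smul hsub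
  have hvd : DifferentiableAt ℝ v x := by
    rw [hv]; exact (differentiableAt_const a).add (hn.const_smul s)
  -- fderiv of v
  have hfv : fderiv ℝ v x = s • fderiv ℝ nvec x := by
    rw [hv]
    rw [fderiv_const_add, fderiv_fun_const_smul hn]
  -- eventually u y - a ≠ 0
  have heve : ∀ᶠ y in nhds x, u y - a ≠ 0 := by
    have hc : ContinuousAt (fun y => u y - a) x := hsub.continuousAt
    exact hc.eventually_ne h0
  set N := fderiv ℝ nvec x with hN
  set nx := nvec x with hnx
  have hnx1 : ‖nx‖ = 1 := by
    rw [hnx, hnvec]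
    simp only [norm_smul, norm_inv, norm_norm]
    exact inv_mul_cancel₀ hρne
  -- orthogonality : ⟪nx, N e⟫ = 0
  have horth : ∀ e, ⟪nx, N e⟫ = 0 := by
    intro e
    have hgconst : (fun y => ⟪nvec y, nvec y⟫) =ᶠ[nhds x] fun _ => (1 : ℝ) := by
      filter_upwards [heve] with y hy
      rw [real_inner_self_eq_norm_sq, hnvec]
      simp only [norm_smul, norm_inv, norm_norm]
      rw [inv_mul_cancel₀ (norm_ne_zero_iff.mpr hy), one_pow]
    have h1 : fderiv ℝ (fun y => ⟪nvec y, nvec y⟫) x = 0 := by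
      rw [hgconst.fderiv_eq, fderiv_fun_const]; rfl
    have h2 := fderiv_inner_apply ℝ hn hn e
    rw [h1] at h2
    simp only [ContinuousLinearMap.zero_apply] at h2
    have h2' : (0:ℝ) = ⟪nx, N e⟫ + ⟪nx, N e⟫ := by
      rw [h2, real_inner_comm]
    linarith
  -- polar decomposition of fderiv u
  set L := fderiv ℝ u x with hL
  set ρ' := fderiv ℝ (fun y => ‖u y - a‖) x with hρ'
  have hpolar : ∀ e, L e = ‖u x - a‖ • N e + ρ' e • nx := by
    intro e
    have hE : (fun y => u y - a) =ᶠ[nhds x] fun y => ‖u y - a‖ • nvec y := by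
      filter_upwards [heve] with y hy
      rw [hnvec]
      rw [smul_smul, mul_inv_cancel₀ (norm_ne_zero_iff.mpr hy), one_smul]
    have h3 : fderiv ℝ (fun y => u y - a) x = fderiv ℝ (fun y => ‖u y - a‖ • nvec y) x :=
      hE.fderiv_eq
    have h4 := fderiv_fun_smul hρ hn
    have h6 : L = ‖u x - a‖ • N + ρ'.smulRight nx := by
      rw [hL, ← fderiv_sub_const a, h3, h4]
    rw [h6]
    simp [ContinuousLinearMap.smulRight_apply]
  -- per-column inequality
  have hcol : ∀ e : EuclideanSpace ℝ (Fin n),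
      ‖u x - a‖ ^ 2 * ‖N e‖ ^ 2 ≤ ‖L e‖ ^ 2 := by
    intro e
    rw [hpolar e, norm_add_sq_real]
    have hin : ⟪‖u x - a‖ • N e, ρ' e • nx⟫ = 0 := by
      rw [real_inner_smul_left, real_inner_smul_right, real_inner_comm, horth e]
      ring
    rw [hin]
    have h6 : ‖‖u x - a‖ • N e‖ ^ 2 = ‖u x - a‖ ^ 2 * ‖N e‖ ^ 2 := by
      rw [norm_smul, norm_norm, mul_pow]
    nlinarith [sq_nonneg (‖ρ' e • nx‖)]
  refine ⟨hvd, ?_, ?_, ?_, ?_⟩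
  · unfold hsNorm
    apply Real.sqrt_le_sqrt
    apply Finset.sum_le_sum
    intro i _
    rw [hfv]
    simp only [ContinuousLinearMap.smul_apply, norm_smul, Real.norm_eq_abs, mul_pow, sq_abs]
    calc s ^ 2 * ‖N (EuclideanSpace.single i 1)‖ ^ 2
        ≤ ‖u x - a‖ ^ 2 * ‖N (EuclideanSpace.single i 1)‖ ^ 2 := by
          apply mul_le_mul_of_nonneg_right _ (sq_nonneg _)
          exact pow_le_pow_left₀ hs.le hgt.le 2
      _ ≤ ‖L (EuclideanSpace.single i 1)‖ ^ 2 := hcol _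
  · rw [hsNorm_sq', hsNorm_sq', hfv, Finset.mul_sum]
    congr 1
    ext i
    simp only [ContinuousLinearMap.smul_apply, norm_smul, Real.norm_eq_abs, mul_pow, sq_abs]
  · apply mul_le_mul_of_nonneg_right _ (sq_nonneg _)
    exact pow_le_pow_left₀ hs.le hgt.le 2
  · rw [hsNorm_sq', hsNorm_sq', Finset.mul_sum]
    exact Finset.sum_le_sum fun i _ => hcol _
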